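/- With j as defined in the previous item (under the hypothesis [[ζ, θζ̄], ζ] = −2ζ), the map j is defined over ℝ with respect to the real forms sl(2, ℝ) and g_R (i.e., j(X̄) = j(X)̄), and is equivariant for the Cartan involutions (i.e., j(−Xᵀ) = θ(j(X)) where −Xᵀ is the Cartan involution of sl(2, ℂ) relative to SO(2)). -/

import Mathlib

/-- Let `L` be a complex Lie algebra with a conjugation `σ`
(additive, antilinear, involutive, bracket-preserving — the conjugation of the
real form `g_R`) and a Cartan involution `θ` (a ℂ-linear Lie algebra map of
order two commuting with `σ`).  Let `ζ ∈ L` be nilpotent-critical: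
`θζ = -ζ` (i.e. `ζ ∈ p`), and with `w := θ(σζ) (= θζ̄)` assume
`⁅⁅ζ, w⁆, ζ⁆ = -2ζ` and `⁅⁅ζ, w⁆, w⁆ = 2w`.  Define `j` on the standard basis
by `j(h) = ζ - w`, `j(e) = (ζ + w + ⁅ζ, w⁆)/(2i)`,
`j(f) = (ζ + w - ⁅ζ, w⁆)/(2i)`.  Then `j` is defined over ℝ — `σ` fixes
`j(h), j(e), j(f)` (as `h̄ = h`, `ē = e`, `f̄ = f`) — and `j` is equivariant for
the Cartan involutions: since `-hᵀ = -h`, `-eᵀ = -f`, `-fᵀ = -e`, one has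
`θ(j h) = -j h`, `θ(j e) = -j f`, `θ(j f) = -j e`. -/
theorem stmt9 (L : Type*) [LieRing L] [LieAlgebra ℂ L]
    (σ : L →+ L)
    (hσc : ∀ (c : ℂ) (x : L), σ (c • x) = (starRingEnd ℂ c) • σ x)
    (hσlie : ∀ x y : L, σ ⁅x, y⁆ = ⁅σ x, σ y⁆)
    (hσ2 : ∀ x : L, σ (σ x) = x)
    (θ : L →ₗ⁅ℂ⁆ L) (hθ2 : ∀ x : L, θ (θ x) = x)
    (hcomm : ∀ x : L, θ (σ x) = σ (θ x))
    (ζ : L) (hζp : θ ζ = -ζ)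
    (h1 : ⁅⁅ζ, θ (σ ζ)⁆, ζ⁆ = (-2 : ℂ) • ζ)
    (h2 : ⁅⁅ζ, θ (σ ζ)⁆, θ (σ ζ)⁆ = (2 : ℂ) • (θ (σ ζ))) :
    (σ (ζ - θ (σ ζ)) = ζ - θ (σ ζ) ∧
     σ ((2 * Complex.I)⁻¹ • (ζ + θ (σ ζ) + ⁅ζ, θ (σ ζ)⁆))
       = (2 * Complex.I)⁻¹ • (ζ + θ (σ ζ) + ⁅ζ, θ (σ ζ)⁆) ∧
     σ ((2 * Complex.I)⁻¹ • (ζ + θ (σ ζ) - ⁅ζ, θ (σ ζ)⁆))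
       = (2 * Complex.I)⁻¹ • (ζ + θ (σ ζ) - ⁅ζ, θ (σ ζ)⁆)) ∧
    (θ (ζ - θ (σ ζ)) = -(ζ - θ (σ ζ)) ∧
     θ ((2 * Complex.I)⁻¹ • (ζ + θ (σ ζ) + ⁅ζ, θ (σ ζ)⁆))
       = -((2 * Complex.I)⁻¹ • (ζ + θ (σ ζ) - ⁅ζ, θ (σ ζ)⁆)) ∧
     θ ((2 * Complex.I)⁻¹ • (ζ + θ (σ ζ) - ⁅ζ, θ (σ ζ)⁆))
       = -((2 * Complex.I)⁻¹ • (ζ + θ (σ ζ) + ⁅ζ, θ (σ ζ)⁆))) := by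
  set w := θ (σ ζ) with hw
  have hσζ : σ ζ = -w := by rw [hw, hcomm, hζp, map_neg, neg_neg]
  have hσw : σ w = -ζ := by rw [hw, ← hcomm, hσ2, hζp]
  have hθw : θ w = -w := by rw [hw, hθ2]; exact hσζ
  have hc : starRingEnd ℂ (2 * Complex.I)⁻¹ = -(2 * Complex.I)⁻¹ := by
    simp [Complex.ext_iff]
  refine ⟨⟨?_, ?_, ?_⟩, ?_, ?_, ?_⟩
  · rw [map_sub, hσζ, hσw]; abel
  · rw [hσc, hc, map_add, map_add, hσlie, hσζ, hσw, neg_lie, lie_neg, neg_neg,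
      ← lie_skew ζ w]
    module
  · rw [hσc, hc, map_sub, map_add, hσlie, hσζ, hσw, neg_lie, lie_neg, neg_neg,
      ← lie_skew ζ w]
    module
  · rw [map_sub, hζp, hθw]; abel
  · rw [map_smul, map_add, map_add, θ.map_lie, hζp, hθw, neg_lie,
      lie_neg, neg_neg]
    module
  · rw [map_smul, map_sub, map_add, θ.map_lie, hζp, hθw, neg_lie,
      lie_neg, neg_neg]
    module
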